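/- arXiv:1212.2842 — 3 statements merged into one kernel-verified Lean document; each statement's English description precedes it below -/
import Mathlib

section
/- Let F be a field, A a finite-dimensional F-algebra, and ι an F-linear anti-automorphism of A such that ι ∘ ι is conjugation by a unit u of A. For a finite-dimensional A-module M, let δM denote the F-linear dual Hom_F(M, F) endowed with the A-module structure (a · f)(m) = f(ι(a) m). Then for every finite-dimensional A-module M there is an isomorphism of A-modules δ(δM) ≅ M. -/
/-- Let `ι` be an `F`-linear anti-automorphism of a finite-dimensional `F`-algebra `A` such
that `ι ∘ ι` is conjugation by a unit `u`.  For a finite-dimensional `A`-module `M`, the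
twisted dual `δM` is `Hom_F(M, F)` with action `(a • f) m = f (ι a • m)`; thus the action of
`a` on `δM` is `(ι a • ·)ᵀ` and the action of `a` on `δ(δM)` is `((ι (ι a) • ·)ᵀ)ᵀ`, where
`(·)ᵀ` denotes `LinearMap.dualMap`.  Then `δ(δM) ≅ M` as `A`-modules, i.e. there is an
`F`-linear equivalence `e : δ(δM) ≃ M` intertwining the two `A`-actions. -/
theorem twisted_double_dual_iso
    (F : Type) [Field F] (A : Type) [Ring A] [Algebra F A] [FiniteDimensional F A]
    (M : Type) [AddCommGroup M] [Module F M] [Module A M] [IsScalarTower F A M]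
    [FiniteDimensional F M]
    (ι : A ≃ₗ[F] A)
    (hι_mul : ∀ a b : A, ι (a * b) = ι b * ι a)
    (hι_one : ι 1 = 1)
    (u : Aˣ)
    (hu : ∀ a : A, ι (ι a) = (u : A) * a * ((u⁻¹ : Aˣ) : A)) :
    ∃ e : Module.Dual F (Module.Dual F M) ≃ₗ[F] M,
      ∀ (a : A) (Φ : Module.Dual F (Module.Dual F M)),
        e (((DistribMulAction.toLinearMap F M (ι (ι a))).dualMap).dualMap Φ) = a • e Φ := by
  classical
  have hcomm : ∀ (b : A) (m : M),
      (Module.evalEquiv F M).symm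
        (((DistribMulAction.toLinearMap F M b).dualMap).dualMap (Module.evalEquiv F M m))
        = b • m := by
    intro b m
    have : ((DistribMulAction.toLinearMap F M b).dualMap).dualMap (Module.evalEquiv F M m)
        = Module.evalEquiv F M (b • m) := by
      ext f
      simp [Module.evalEquiv_apply, Module.Dual.eval_apply, LinearMap.dualMap_apply]
      rfl
    rw [this, LinearEquiv.symm_apply_apply]
  set smulEq : M ≃ₗ[F] M := DistribMulAction.toLinearEquiv F M (u⁻¹ : Aˣ) with hs
  refine ⟨(Module.evalEquiv F M).symm.trans smulEq, ?_⟩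
  intro a Φ
  obtain ⟨m, rfl⟩ := (Module.evalEquiv F M).surjective Φ
  simp only [LinearEquiv.trans_apply, LinearEquiv.symm_apply_apply]
  rw [hcomm (ι (ι a)) m, hu a]
  show (u⁻¹ : Aˣ) • ((u : A) * a * ((u⁻¹ : Aˣ) : A)) • m = a • (u⁻¹ : Aˣ) • m
  rw [Units.smul_def, Units.smul_def, smul_smul, smul_smul]
  congr 1
  simp [mul_assoc]
end

section
/- Let F be a field, A a finite-dimensional F-algebra, w a positive natural number, and M, N finite-dimensional A-modules. Then the natural F-linear map (⨂_{i ∈ Fin w} Hom_A(M, N)) → Hom_{⨂_{i ∈ Fin w} A}(⨂_{i ∈ Fin w} M, ⨂_{i ∈ Fin w} N), sending f_1 ⊗ ⋯ ⊗ f_w to the map m_1 ⊗ ⋯ ⊗ m_w ↦ f_1(m_1) ⊗ ⋯ ⊗ f_w(m_w), is an isomorphism of F-vector spaces. -/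
open scoped TensorProduct
open PiTensorProduct
open Module

section PTB
variable {F : Type*} [Field F] {ι : Type*} [Fintype ι] [DecidableEq ι]
  {V : Type*} [AddCommGroup V] [Module F V] {κ : Type*} [Fintype κ] [DecidableEq κ]

/-- The coordinate map of the pi tensor power with respect to a basis of each factor. -/
noncomputable def ptCoord (b : Basis κ F V) : (⨂[F] _ : ι, V) →ₗ[F] ((ι → κ) → F) :=
  PiTensorProduct.lift <| MultilinearMap.pi fun p =>
    (MultilinearMap.mkPiAlgebra F ι F).compLinearMap fun i => b.coord (p i)

@[simp] lemma ptCoord_tprod (b : Basis κ F V) (m : ι → V) (p : ι → κ) :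
    ptCoord b (tprod F m) p = ∏ i, b.repr (m i) (p i) := by
  simp [ptCoord, MultilinearMap.pi, Basis.coord]

/-- The inverse of `ptCoord`. -/
noncomputable def ptSynth (b : Basis κ F V) : ((ι → κ) → F) →ₗ[F] (⨂[F] _ : ι, V) :=
  ∑ p : ι → κ, (LinearMap.proj p).smulRight (tprod F fun i => b (p i))

lemma ptSynth_apply (b : Basis κ F V) (g : (ι → κ) → F) :
    ptSynth b g = ∑ p : ι → κ, g p • tprod F fun i => b (p i) := by
  simp [ptSynth, LinearMap.sum_apply]

lemma ptSynth_ptCoord (b : Basis κ F V) (x : ⨂[F] _ : ι, V) :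
    ptSynth b (ptCoord b x) = x := by
  have : (ptSynth (ι := ι) b ∘ₗ ptCoord b) = LinearMap.id := by
    ext m
    simp only [LinearMap.compMultilinearMap_apply, LinearMap.coe_comp, Function.comp_apply,
      LinearMap.id_coe, id_eq]
    rw [ptSynth_apply]
    conv_rhs => rw [show m = fun i => ∑ k : κ, b.repr (m i) k • b k by
      funext i; rw [Basis.sum_repr]]
    rw [MultilinearMap.map_sum (PiTensorProduct.tprod F) (fun i k => b.repr (m i) k • b k)]
    refine Finset.sum_congr rfl fun p _ => ?_
    rw [MultilinearMap.map_smul_univ]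
    simp
  exact DFunLike.congr_fun this x

lemma ptCoord_ptSynth (b : Basis κ F V) (g : (ι → κ) → F) :
    ptCoord b (ptSynth b g) = g := by
  funext q
  rw [ptSynth_apply, map_sum]
  simp only [Finset.sum_apply, map_smul, Pi.smul_apply, ptCoord_tprod, Basis.repr_self,
    smul_eq_mul]
  rw [Finset.sum_eq_single q]
  · simp
  · intro p _ hpq
    obtain ⟨i, hi⟩ := Function.ne_iff.mp hpq
    rw [Finset.prod_eq_zero (Finset.mem_univ i) (by simp [Finsupp.single_apply, hi])]
    simp
  · simp

noncomputable def ptEquiv (b : Basis κ F V) : (⨂[F] _ : ι, V) ≃ₗ[F] ((ι → κ) → F) :=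
  LinearEquiv.ofLinear (ptCoord b) (ptSynth b)
    (LinearMap.ext fun g => ptCoord_ptSynth b g)
    (LinearMap.ext fun x => ptSynth_ptCoord b x)

/-- A basis of the pi tensor power from a basis of the factor. -/
noncomputable def ptBasis (b : Basis κ F V) : Basis (ι → κ) F (⨂[F] _ : ι, V) :=
  Basis.ofRepr <|
    (ptEquiv b).trans (Finsupp.linearEquivFunOnFinite F F (ι → κ)).symm

@[simp] lemma ptBasis_apply (b : Basis κ F V) (p : ι → κ) :
    ptBasis b p = tprod F fun i => b (p i) := by
  rw [Basis.apply_eq_iff]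
  show (Finsupp.linearEquivFunOnFinite F F (ι → κ)).symm (ptCoord b (tprod F fun i => b (p i)))
      = Finsupp.single p 1
  have : ptCoord b (tprod F fun i => b (p i)) = ⇑(Finsupp.single p (1 : F)) := by
    funext q
    simp only [ptCoord_tprod, Basis.repr_self]
    rcases eq_or_ne p q with rfl | h
    · simp
    · obtain ⟨i, hi⟩ := Function.ne_iff.mp h
      rw [Finset.prod_eq_zero (Finset.mem_univ i) (by simp [Finsupp.single_apply, hi]),
        (Finsupp.single_eq_of_ne h.symm).symm]
  rw [this, Finsupp.linearEquivFunOnFinite_symm_coe]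

end PTB

section SLOT
variable {F : Type*} [Field F] {ι : Type*} [Fintype ι] [DecidableEq ι]
  {H : Type*} [AddCommGroup H] [Module F H]

/-- The family of endomorphisms which is `f` in slot `i` and the identity elsewhere. -/
def sl (i : ι) (f : H →ₗ[F] H) : ι → (H →ₗ[F] H) :=
  Function.update (fun _ => LinearMap.id) i f

@[simp] lemma sl_same (i : ι) (f : H →ₗ[F] H) : sl i f i = f := by
  simp [sl]

lemma sl_ne (i : ι) (f : H →ₗ[F] H) {j : ι} (h : j ≠ i) : sl i f j = LinearMap.id := by
  simp [sl, Function.update_of_ne h]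

lemma sl_apply_vec (i : ι) (f : H →ₗ[F] H) (m : ι → H) :
    (fun j => sl i f j (m j)) = Function.update m i (f (m i)) := by
  funext j
  rcases eq_or_ne j i with rfl | hj
  · simp
  · simp [sl_ne _ _ hj, Function.update_of_ne hj]

lemma map_sl_comp (i : ι) (f g : H →ₗ[F] H) :
    map (sl i (f ∘ₗ g)) = map (sl i f) ∘ₗ map (sl i g) := by
  rw [← map_comp]
  congr 1
  funext j
  rcases eq_or_ne j i with rfl | hj
  · simp
  · simp [sl_ne _ _ hj]

lemma map_sl_add (i : ι) (f g : H →ₗ[F] H) :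
    map (R := F) (sl i (f + g)) = map (sl i f) + map (sl i g) := by
  ext m
  simp only [LinearMap.compMultilinearMap_apply, map_tprod, LinearMap.add_apply]
  rw [sl_apply_vec, sl_apply_vec, sl_apply_vec, LinearMap.add_apply,
    MultilinearMap.map_update_add]

lemma map_sl_id (i : ι) : map (R := F) (sl i (LinearMap.id (M := H))) = LinearMap.id := by
  have : sl (F := F) i (LinearMap.id (M := H)) = fun _ => LinearMap.id := by
    funext j
    rcases eq_or_ne j i with rfl | hj
    · simp
    · simp [sl_ne _ _ hj]
  rw [this, map_id]

/-- `map (sl i ·)` as an additive monoid hom. -/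
noncomputable def slHom (i : ι) : (H →ₗ[F] H) →+ ((⨂[F] _ : ι, H) →ₗ[F] ⨂[F] _ : ι, H) :=
  AddMonoidHom.mk' (fun f => map (sl i f)) (map_sl_add i)

lemma map_sl_sum {α : Type*} (i : ι) (s : Finset α) (g : α → (H →ₗ[F] H)) :
    map (R := F) (sl i (∑ k ∈ s, g k)) = ∑ k ∈ s, map (sl i (g k)) :=
  map_sum (slHom i) g s

/-- Pi tensor product of injective linear maps is injective (over a field). -/
lemma ptMap_injective {s t : ι → Type*} [∀ i, AddCommGroup (s i)] [∀ i, Module F (s i)]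
    [∀ i, AddCommGroup (t i)] [∀ i, Module F (t i)]
    (f : ∀ i, s i →ₗ[F] t i) (hf : ∀ i, Function.Injective (f i)) :
    Function.Injective (map f) := by
  choose g hg using fun i =>
    (f i).exists_leftInverse_of_injective (LinearMap.ker_eq_bot.mpr (hf i))
  have h : map g ∘ₗ map f = LinearMap.id := by
    rw [← map_comp, show (fun i => g i ∘ₗ f i) = fun i => LinearMap.id from funext hg, map_id]
  intro x y hxy
  have := congrArg (map g) hxy
  rwa [← LinearMap.comp_apply, ← LinearMap.comp_apply, h, LinearMap.id_apply,
    LinearMap.id_apply] at this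

/-- Factoring a linear map through another with smaller kernel (over a field). -/
lemma factor_through {V W U : Type*} [AddCommGroup V] [Module F V] [AddCommGroup W] [Module F W]
    [AddCommGroup U] [Module F U] (f : V →ₗ[F] W) (g : V →ₗ[F] U)
    (h : LinearMap.ker f ≤ LinearMap.ker g) : ∃ u : W →ₗ[F] U, u ∘ₗ f = g := by
  set e := f.quotKerEquivRange
  have hinj2 : LinearMap.ker ((LinearMap.range f).subtype ∘ₗ e.toLinearMap) = ⊥ := by
    rw [LinearMap.ker_eq_bot]
    exact (Submodule.injective_subtype _).comp e.injective
  obtain ⟨l, hl⟩ :=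
    ((LinearMap.range f).subtype ∘ₗ e.toLinearMap).exists_leftInverse_of_injective hinj2
  refine ⟨(LinearMap.ker f).liftQ g h ∘ₗ l, ?_⟩
  ext x
  have h1 : l (f x) = Submodule.Quotient.mk x := by
    have : f x = ((LinearMap.range f).subtype ∘ₗ e.toLinearMap) (Submodule.Quotient.mk x) := by
      simp [e, LinearMap.quotKerEquivRange_apply_mk]
    rw [this, ← LinearMap.comp_apply, hl, LinearMap.id_apply]
  simp [h1]

end SLOT
section PACK
variable {ι μ ν : Type*}

/-- Repackaging functions into a sigma type of pairs. -/
def packEquiv : (ι → Σ _ : μ, ν) ≃ (Σ _ : ι → μ, ι → ν) where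
  toFun p := ⟨fun i => (p i).1, fun i => (p i).2⟩
  invFun q := fun i => ⟨q.1 i, q.2 i⟩
  left_inv p := by funext i; exact Sigma.eta _
  right_inv q := by cases q; rfl

end PACK

section BIJ
variable {F : Type*} [Field F] {ι : Type*} [Fintype ι] [DecidableEq ι]
  {M N : Type*} [AddCommGroup M] [Module F M] [AddCommGroup N] [Module F N]
  [FiniteDimensional F M] [FiniteDimensional F N]

open Module in
lemma pT_bijective :
    Function.Bijective (piTensorHomMap :
      (⨂[F] _ : ι, (M →ₗ[F] N)) →ₗ[F] (⨂[F] _ : ι, M) →ₗ[F] ⨂[F] _ : ι, N) := by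
  classical
  set bm : Basis (Fin (finrank F M)) F M := finBasis F M with hbm
  set bn : Basis (Fin (finrank F N)) F N := finBasis F N with hbn
  set bh : Basis (Σ _ : Fin (finrank F M), Fin (finrank F N)) F (M →ₗ[F] N) :=
    (Pi.basis fun _ => bn).map (bm.constr F) with hbh
  have bh_apply : ∀ (k : Fin (finrank F M)) (l : Fin (finrank F N)) (k' : Fin (finrank F M)),
      bh ⟨k, l⟩ (bm k') = if k' = k then bn l else 0 := by
    intro k l k'
    rw [hbh, Basis.map_apply, Pi.basis_apply]
    simp [Basis.constr_basis, Pi.single_apply]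
  set BM : Basis (ι → Fin (finrank F M)) F (⨂[F] _ : ι, M) := ptBasis bm with hBM
  set BN : Basis (ι → Fin (finrank F N)) F (⨂[F] _ : ι, N) := ptBasis bn with hBN
  set BH : Basis (ι → Σ _ : Fin (finrank F M), Fin (finrank F N)) F
      (⨂[F] _ : ι, (M →ₗ[F] N)) := ptBasis bh with hBH
  set BHom : Basis (Σ _ : ι → Fin (finrank F M), ι → Fin (finrank F N)) F
      ((⨂[F] _ : ι, M) →ₗ[F] ⨂[F] _ : ι, N) := (Pi.basis fun _ => BN).map (BM.constr F)
    with hBHom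
  have key : ∀ p, piTensorHomMap (BH p) = BHom (packEquiv p) := by
    intro p
    refine BM.ext fun q => ?_
    have hrhs : BHom (packEquiv p) (BM q) =
        if q = (fun i => (p i).1) then BN (fun i => (p i).2) else 0 := by
      rw [hBHom, Basis.map_apply, Pi.basis_apply]
      simp [Basis.constr_basis, Pi.single_apply, packEquiv]
    rw [hrhs, hBH, hBM, ptBasis_apply, ptBasis_apply, piTensorHomMap_tprod_tprod]
    by_cases hq : q = fun i => (p i).1
    · subst hq
      rw [if_pos rfl]
      have : (fun i => bh (p i) (bm ((p i).1))) = fun i => bn ((p i).2) := by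
        funext i
        rw [bh_apply, if_pos rfl]
      rw [this, hBN, ptBasis_apply]
    · rw [if_neg hq]
      obtain ⟨i₀, hi₀⟩ := Function.ne_iff.mp hq
      refine MultilinearMap.map_coord_zero _ i₀ ?_
      rw [bh_apply, if_neg hi₀]
  have : (piTensorHomMap :
      (⨂[F] _ : ι, (M →ₗ[F] N)) →ₗ[F] (⨂[F] _ : ι, M) →ₗ[F] ⨂[F] _ : ι, N) =
      (BH.equiv BHom packEquiv).toLinearMap :=
    BH.ext fun p => by rw [key, LinearEquiv.coe_coe, Basis.equiv_apply]
  rw [this]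
  exact (BH.equiv BHom packEquiv).bijective

end BIJ
section COMM
variable {F : Type*} [Field F] {A : Type*} [Ring A] [Algebra F A]
  {M N : Type*} [AddCommGroup M] [Module F M] [Module A M] [IsScalarTower F A M]
  [AddCommGroup N] [Module F N] [Module A N] [IsScalarTower F A N]

/-- The commutator with the action of `a : A`, as a linear map on `Hom_F(M, N)`,
linear in `a`. -/
noncomputable def commL : A →ₗ[F] ((M →ₗ[F] N) →ₗ[F] (M →ₗ[F] N)) where
  toFun a := LinearMap.llcomp F M N N (DistribMulAction.toLinearMap F N a)
    - LinearMap.lcomp F N (DistribMulAction.toLinearMap F M a)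
  map_add' a b := by
    ext f m
    simp [add_smul, DistribMulAction.toLinearMap]
    abel
  map_smul' c a := by
    ext f m
    simp [smul_assoc, smul_sub, DistribMulAction.toLinearMap]

@[simp] lemma commL_apply (a : A) (f : M →ₗ[F] N) (m : M) :
    commL a f m = a • f m - f (a • m) := rfl

variable {ι : Type*} [Fintype ι] [DecidableEq ι]

lemma pT_comm (a : A) (i : ι) (T : ⨂[F] _ : ι, (M →ₗ[F] N)) :
    piTensorHomMap (map (sl i (commL (N := N) a)) T) =
      map (sl i (DistribMulAction.toLinearMap F N a)) ∘ₗ piTensorHomMap T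
        - piTensorHomMap T ∘ₗ map (sl i (DistribMulAction.toLinearMap F M a)) := by
  have key : ∀ f : ι → (M →ₗ[F] N),
      piTensorHomMap (map (sl i (commL (N := N) a)) (tprod F f)) =
        map (sl i (DistribMulAction.toLinearMap F N a)) ∘ₗ piTensorHomMap (tprod F f)
          - piTensorHomMap (tprod F f) ∘ₗ map (sl i (DistribMulAction.toLinearMap F M a)) := by
    intro f
    apply PiTensorProduct.ext
    apply MultilinearMap.ext
    intro x
    simp only [LinearMap.compMultilinearMap_apply, LinearMap.sub_apply, LinearMap.comp_apply,
      map_tprod, piTensorHomMap_tprod_tprod]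
    have hL : (fun j => (sl i (commL (N := N) a) j (f j)) (x j)) =
        Function.update (fun j => f j (x j)) i (a • f i (x i) - f i (a • x i)) := by
      funext j
      rcases eq_or_ne j i with rfl | hj
      · simp
      · simp [sl_ne _ _ hj, Function.update_of_ne hj]
    have hR1 : (fun j => sl i (DistribMulAction.toLinearMap F N a) j ((f j) (x j))) =
        Function.update (fun j => f j (x j)) i (a • f i (x i)) := by
      funext j
      rcases eq_or_ne j i with rfl | hj
      · simp [DistribMulAction.toLinearMap]
      · simp [sl_ne _ _ hj, Function.update_of_ne hj]
    have hR2 : (fun j => (f j) (sl i (DistribMulAction.toLinearMap F M a) j (x j))) =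
        Function.update (fun j => f j (x j)) i (f i (a • x i)) := by
      funext j
      rcases eq_or_ne j i with rfl | hj
      · simp [DistribMulAction.toLinearMap]
      · simp [sl_ne _ _ hj, Function.update_of_ne hj]
    rw [hL, hR1, hR2, MultilinearMap.map_update_sub]
  induction T using PiTensorProduct.induction_on with
  | smul_tprod r f =>
    rw [LinearMap.map_smul, LinearMap.map_smul, key, LinearMap.map_smul, smul_sub,
      LinearMap.comp_smul, LinearMap.smul_comp]
  | add x y hx hy =>
    rw [map_add, map_add, map_add, hx, hy, LinearMap.comp_add, LinearMap.add_comp]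
    abel

lemma comm_all_mem {f : M →ₗ[F] N} (hf : ∀ a : A, commL (N := N) a f = 0) :
    f ∈ LinearMap.range (LinearMap.restrictScalarsₗ F A M N F) := by
  have h : ∀ (a : A) (m : M), f (a • m) = a • f m := by
    intro a m
    have := DFunLike.congr_fun (hf a) m
    rw [commL_apply, LinearMap.zero_apply, sub_eq_zero] at this
    exact this.symm
  exact ⟨{ toFun := f, map_add' := f.map_add, map_smul' := h }, by ext m; rfl⟩

end COMM


/-- Let `A` be a finite-dimensional `F`-algebra, `w ≥ 1`, and `M`, `N` finite-dimensional
`A`-modules.  The natural `F`-linear map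
`⨂_{i ∈ Fin w} Hom_A(M, N) → Hom_{⨂ A}(⨂ M, ⨂ N)`, `f₁ ⊗ ⋯ ⊗ f_w ↦ f₁ ⊗ ⋯ ⊗ f_w`, is an
isomorphism of `F`-vector spaces: as a map into `Hom_F(⨂ M, ⨂ N)` it is injective, and its
range is exactly the set of maps commuting with the action of every pure tensor
`a₁ ⊗ ⋯ ⊗ a_w` of the tensor power algebra. -/
theorem piTensorHom_iso
    (F : Type) [Field F]
    (A : Type) [Ring A] [Algebra F A] [FiniteDimensional F A]
    (w : ℕ) (hw : 0 < w)
    (M N : Type) [AddCommGroup M] [Module F M] [Module A M] [IsScalarTower F A M]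
    [AddCommGroup N] [Module F N] [Module A N] [IsScalarTower F A N]
    [FiniteDimensional F M] [FiniteDimensional F N] :
    Function.Injective
      (LinearMap.comp PiTensorProduct.piTensorHomMap
        (PiTensorProduct.map
          (fun _i : Fin w => LinearMap.restrictScalarsₗ F A M N F))) ∧
    ∀ h : (⨂[F] _i : Fin w, M) →ₗ[F] (⨂[F] _i : Fin w, N),
      (h ∈ LinearMap.range
          (LinearMap.comp PiTensorProduct.piTensorHomMap
            (PiTensorProduct.map
              (fun _i : Fin w => LinearMap.restrictScalarsₗ F A M N F))) ↔
        ∀ a : Fin w → A,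
          h.comp (PiTensorProduct.map
              (fun i => DistribMulAction.toLinearMap F M (a i))) =
            (PiTensorProduct.map
              (fun i => DistribMulAction.toLinearMap F N (a i))).comp h) := by
  classical
  set rS := LinearMap.restrictScalarsₗ F A M N F with hrS
  have hrS_inj : Function.Injective rS := fun f g hfg => by
    ext m
    exact DFunLike.congr_fun hfg m
  have hmap_inj : Function.Injective (map (fun _ : Fin w => rS)) :=
    ptMap_injective _ (fun _ => hrS_inj)
  have hpT : Function.Bijective (piTensorHomMap :
      (⨂[F] _ : Fin w, (M →ₗ[F] N)) →ₗ[F] (⨂[F] _ : Fin w, M) →ₗ[F] ⨂[F] _ : Fin w, N) :=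
    pT_bijective
  constructor
  · rw [LinearMap.coe_comp]
    exact hpT.injective.comp hmap_inj
  intro h
  constructor
  · rintro ⟨g, rfl⟩ a
    induction g using PiTensorProduct.induction_on with
    | smul_tprod r f =>
      rw [LinearMap.comp_apply, LinearMap.map_smul, LinearMap.map_smul, LinearMap.smul_comp,
        LinearMap.comp_smul, map_tprod, piTensorHomMap_tprod_eq_map, ← map_comp, ← map_comp]
      congr 2
      funext i
      ext m
      simp only [LinearMap.comp_apply, LinearMap.coe_comp, Function.comp_apply,
        DistribMulAction.toLinearMap, DistribSMul.toLinearMap_apply, LinearMap.restrictScalarsₗ_apply,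
        LinearMap.coe_restrictScalars]
      exact map_smul (f i) (a i) m
    | add x y hx hy =>
      rw [map_add, LinearMap.add_comp, LinearMap.comp_add, hx, hy]
  · intro hcomm
    obtain ⟨T, rfl⟩ := hpT.surjective h
    suffices hT : T ∈ LinearMap.range (map (fun _ : Fin w => rS)) by
      obtain ⟨g, hg⟩ := hT
      exact ⟨g, by rw [LinearMap.comp_apply, hg]⟩
    have hslot : ∀ (i : Fin w) (a₀ : A), map (sl i (commL (N := N) a₀)) T = 0 := by
      intro i a₀
      apply hpT.injective
      rw [map_zero, pT_comm]
      have hM : (fun j : Fin w =>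
          DistribMulAction.toLinearMap F M (Function.update (fun _ => (1 : A)) i a₀ j)) =
          sl i (DistribMulAction.toLinearMap F M a₀) := by
        funext j
        rcases eq_or_ne j i with rfl | hj
        · simp [sl]
        · rw [Function.update_of_ne hj, sl_ne _ _ hj]
          ext m
          simp [DistribMulAction.toLinearMap]
      have hN : (fun j : Fin w =>
          DistribMulAction.toLinearMap F N (Function.update (fun _ => (1 : A)) i a₀ j)) =
          sl i (DistribMulAction.toLinearMap F N a₀) := by
        funext j
        rcases eq_or_ne j i with rfl | hj
        · simp [sl]
        · rw [Function.update_of_ne hj, sl_ne _ _ hj]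
          ext m
          simp [DistribMulAction.toLinearMap]
      have hc := hcomm (Function.update (fun _ => (1 : A)) i a₀)
      rw [hM, hN] at hc
      rw [sub_eq_zero]
      exact hc.symm
    set S := LinearMap.range rS with hS
    obtain ⟨p, hp⟩ := S.subtype.exists_leftInverse_of_injective (Submodule.ker_subtype S)
    set π : (M →ₗ[F] N) →ₗ[F] (M →ₗ[F] N) := S.subtype ∘ₗ p with hπ
    have hπS : ∀ f ∈ S, π f = f := by
      intro f hf
      have h1 : p f = ⟨f, hf⟩ := DFunLike.congr_fun hp (⟨f, hf⟩ : S)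
      rw [hπ, LinearMap.comp_apply, h1]
      rfl
    set r : (M →ₗ[F] N) →ₗ[F] (M →ₗ[F] N) := LinearMap.id - π with hr
    set bA := Module.finBasis F A with hbA
    have hker : LinearMap.ker
        (LinearMap.pi (fun k => commL (N := N) (bA k)) :
          (M →ₗ[F] N) →ₗ[F] (Fin (Module.finrank F A) → (M →ₗ[F] N))) ≤ LinearMap.ker r := by
      intro f hf
      rw [LinearMap.mem_ker] at hf ⊢
      have hbasis : ∀ k, commL (N := N) (bA k) f = 0 := fun k => congrFun hf k
      have hall : ∀ a : A, commL (N := N) a f = 0 := by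
        have : ((commL (F := F) (A := A) (M := M) (N := N)).flip f) = 0 :=
          bA.ext fun k => hbasis k
        intro a
        exact DFunLike.congr_fun this a
      have hfS : f ∈ S := comm_all_mem hall
      rw [hr, LinearMap.sub_apply, LinearMap.id_apply, hπS f hfS, sub_self]
    obtain ⟨u, hu⟩ := factor_through _ r hker
    have hrsum : r = ∑ k, (u ∘ₗ LinearMap.single F (fun _ => (M →ₗ[F] N)) k) ∘ₗ
        commL (N := N) (bA k) := by
      rw [← hu]
      apply LinearMap.ext
      intro f
      have h2 : (LinearMap.pi fun k => commL (N := N) (bA k)) f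
          = ∑ k, Pi.single k (commL (N := N) (bA k) f) :=
        (Finset.univ_sum_single _).symm
      rw [LinearMap.comp_apply, h2, map_sum, LinearMap.sum_apply]
      refine Finset.sum_congr rfl fun k _ => ?_
      rw [LinearMap.comp_apply, LinearMap.comp_apply]
      congr 1
    have hfix : ∀ i : Fin w, map (sl i π) T = T := by
      intro i
      have h0 : map (sl i r) T = 0 := by
        rw [hrsum, map_sl_sum, LinearMap.sum_apply]
        refine Finset.sum_eq_zero fun k _ => ?_
        rw [map_sl_comp, LinearMap.comp_apply, hslot i (bA k), map_zero]
      have hπr : π + r = LinearMap.id := by rw [hr]; abel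
      calc map (sl i π) T = map (sl i π) T + map (sl i r) T := by rw [h0, add_zero]
        _ = map (sl i (π + r)) T := by rw [map_sl_add, LinearMap.add_apply]
        _ = T := by rw [hπr, map_sl_id, LinearMap.id_apply]
    have hall2 : ∀ s : Finset (Fin w),
        map (fun j => if j ∈ s then π else LinearMap.id) T = T := by
      intro s
      induction s using Finset.induction_on with
      | empty =>
        rw [show (fun j : Fin w => if j ∈ (∅ : Finset (Fin w)) then π else LinearMap.id)
            = fun _ => LinearMap.id from by funext j; simp, map_id, LinearMap.id_apply]
      | @insert i s his ih =>
        have hcomp : map (R := F)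
            (fun j : Fin w => if j ∈ insert i s then π else LinearMap.id)
            = map (sl i π) ∘ₗ map (fun j => if j ∈ s then π else LinearMap.id) := by
          rw [← map_comp]
          congr 1
          funext j
          rcases eq_or_ne j i with rfl | hj
          · simp [his]
          · rw [sl_ne _ _ hj]
            by_cases hjs : j ∈ s
            · simp [hjs, Finset.mem_insert, hj]
            · simp [hjs, Finset.mem_insert, hj]
        rw [hcomp, LinearMap.comp_apply, ih, hfix]
    have huniv := hall2 Finset.univ
    rw [show (fun j : Fin w => if j ∈ Finset.univ then π else LinearMap.id) = fun _ => π
      from by funext j; simp] at huniv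
    set ρ : (M →ₗ[F] N) →ₗ[F] (M →ₗ[A] N) :=
      (LinearEquiv.ofInjective rS hrS_inj).symm.toLinearMap ∘ₗ p with hρ
    have hfact : rS ∘ₗ ρ = π := by
      apply LinearMap.ext
      intro f
      have h3 := (LinearEquiv.ofInjective rS hrS_inj).apply_symm_apply (p f)
      have h4 := congrArg (Subtype.val) h3
      rw [LinearEquiv.ofInjective_apply] at h4
      exact h4
    have hTmem : T = map (fun _ : Fin w => rS) (map (fun _ : Fin w => ρ) T) := by
      rw [← LinearMap.comp_apply, ← map_comp,
        show (fun _ : Fin w => rS ∘ₗ ρ) = fun _ : Fin w => π from funext fun _ => hfact]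
      exact huniv.symm
    exact ⟨map (fun _ : Fin w => ρ) T, hTmem.symm⟩
end

section
/- Let F be a field, A an associative unital F-algebra, w a natural number, and ι an F-linear anti-automorphism of A such that ι ∘ ι is conjugation by a unit u of A. Let ι^{[w]} be the anti-automorphism of the wreath product A^{[w]} given on pure tensors by ι^{[w]}(a_1 ⊗ ⋯ ⊗ a_w ⊗ σ) = ι(a_{σ(1)}) ⊗ ⋯ ⊗ ι(a_{σ(w)}) ⊗ σ⁻¹. Then ι^{[w]} ∘ ι^{[w]} is conjugation by the unit (u ⊗ ⋯ ⊗ u) ⊗ 1 of A^{[w]}; in particular it is an inner automorphism of A^{[w]}. -/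
open scoped TensorProduct

/-- Let `ι` be an `F`-linear anti-automorphism of an `F`-algebra `A` such that `ι ∘ ι` is
conjugation by a unit `u` of `A`, let `mul` be the multiplication of the wreath product
`A^{[w]}`, and let `J = ι^{[w]}` be the anti-automorphism of `A^{[w]}` given on pure tensors by
`J (a₁ ⊗ ⋯ ⊗ a_w ⊗ σ) = ι (a_{σ 1}) ⊗ ⋯ ⊗ ι (a_{σ w}) ⊗ σ⁻¹`.
Then `J ∘ J` is conjugation by the unit `U = (u ⊗ ⋯ ⊗ u) ⊗ 1` of `A^{[w]}`:
`U` is invertible, with inverse `V = (u⁻¹ ⊗ ⋯ ⊗ u⁻¹) ⊗ 1`, and `J (J x) = U * x * V` for all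
`x`.  In particular `J ∘ J` is an inner automorphism of `A^{[w]}`. -/
theorem wreath_antiAutomorphism_square_inner
    (F : Type) [Field F] (A : Type) [Ring A] [Algebra F A] (w : ℕ)
    (ι : A ≃ₗ[F] A)
    (hι_mul : ∀ a b : A, ι (a * b) = ι b * ι a)
    (hι_one : ι 1 = 1)
    (u : Aˣ)
    (hu : ∀ a : A, ι (ι a) = (u : A) * a * ((u⁻¹ : Aˣ) : A))
    (mul : ((⨂[F] _i : Fin w, A) ⊗[F] MonoidAlgebra F (Equiv.Perm (Fin w))) →ₗ[F]
        ((⨂[F] _i : Fin w, A) ⊗[F] MonoidAlgebra F (Equiv.Perm (Fin w))) →ₗ[F]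
        ((⨂[F] _i : Fin w, A) ⊗[F] MonoidAlgebra F (Equiv.Perm (Fin w))))
    (hmul : ∀ (a b : Fin w → A) (σ τ : Equiv.Perm (Fin w)),
        mul ((PiTensorProduct.tprod F a) ⊗ₜ[F] MonoidAlgebra.single σ (1 : F))
            ((PiTensorProduct.tprod F b) ⊗ₜ[F] MonoidAlgebra.single τ (1 : F)) =
          (PiTensorProduct.tprod F (fun i => a i * b (σ⁻¹ i))) ⊗ₜ[F]
            MonoidAlgebra.single (σ * τ) (1 : F))
    (J : ((⨂[F] _i : Fin w, A) ⊗[F] MonoidAlgebra F (Equiv.Perm (Fin w))) →ₗ[F]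
        ((⨂[F] _i : Fin w, A) ⊗[F] MonoidAlgebra F (Equiv.Perm (Fin w))))
    (hJ : ∀ (a : Fin w → A) (σ : Equiv.Perm (Fin w)),
        J ((PiTensorProduct.tprod F a) ⊗ₜ[F] MonoidAlgebra.single σ (1 : F)) =
          (PiTensorProduct.tprod F (fun i => ι (a (σ i)))) ⊗ₜ[F]
            MonoidAlgebra.single σ⁻¹ (1 : F)) :
    mul ((PiTensorProduct.tprod F (fun _ => ((u : A)))) ⊗ₜ[F]
          MonoidAlgebra.single (1 : Equiv.Perm (Fin w)) (1 : F))
        ((PiTensorProduct.tprod F (fun _ => (((u⁻¹ : Aˣ) : A)))) ⊗ₜ[F]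
          MonoidAlgebra.single (1 : Equiv.Perm (Fin w)) (1 : F)) =
      (PiTensorProduct.tprod F (fun _ => (1 : A))) ⊗ₜ[F]
        MonoidAlgebra.single (1 : Equiv.Perm (Fin w)) (1 : F) ∧
    mul ((PiTensorProduct.tprod F (fun _ => (((u⁻¹ : Aˣ) : A)))) ⊗ₜ[F]
          MonoidAlgebra.single (1 : Equiv.Perm (Fin w)) (1 : F))
        ((PiTensorProduct.tprod F (fun _ => ((u : A)))) ⊗ₜ[F]
          MonoidAlgebra.single (1 : Equiv.Perm (Fin w)) (1 : F)) =
      (PiTensorProduct.tprod F (fun _ => (1 : A))) ⊗ₜ[F]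
        MonoidAlgebra.single (1 : Equiv.Perm (Fin w)) (1 : F) ∧
    ∀ x, J (J x) =
      mul (mul ((PiTensorProduct.tprod F (fun _ => ((u : A)))) ⊗ₜ[F]
              MonoidAlgebra.single (1 : Equiv.Perm (Fin w)) (1 : F)) x)
        ((PiTensorProduct.tprod F (fun _ => (((u⁻¹ : Aˣ) : A)))) ⊗ₜ[F]
          MonoidAlgebra.single (1 : Equiv.Perm (Fin w)) (1 : F)) := by

  refine ⟨?_, ?_, ?_⟩
  · rw [hmul]
    simp
  · rw [hmul]
    simp
  · have key : ∀ (a : Fin w → A) (σ : Equiv.Perm (Fin w)),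
        J (J ((PiTensorProduct.tprod F a) ⊗ₜ[F] MonoidAlgebra.single σ (1 : F))) =
          mul (mul ((PiTensorProduct.tprod F (fun _ => ((u : A)))) ⊗ₜ[F]
                MonoidAlgebra.single (1 : Equiv.Perm (Fin w)) (1 : F))
              ((PiTensorProduct.tprod F a) ⊗ₜ[F] MonoidAlgebra.single σ (1 : F)))
            ((PiTensorProduct.tprod F (fun _ => (((u⁻¹ : Aˣ) : A)))) ⊗ₜ[F]
              MonoidAlgebra.single (1 : Equiv.Perm (Fin w)) (1 : F)) := by
      intro a σ
      rw [hJ, hJ, hmul, hmul]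
      simp [hu]
    intro x
    induction x using TensorProduct.induction_on with
    | zero => simp
    | add p q hp hq => simp only [map_add, LinearMap.add_apply, hp, hq]
    | tmul t m =>
      induction t using PiTensorProduct.induction_on with
      | smul_tprod r a =>
        rw [← TensorProduct.smul_tmul']
        simp only [map_smul, LinearMap.smul_apply]
        congr 1
        induction m using MonoidAlgebra.induction_linear with
        | zero => simp [TensorProduct.tmul_zero]
        | add p q hp hq =>
          simp only [TensorProduct.tmul_add, map_add, LinearMap.add_apply, hp, hq]
        | single σ c =>
          have hc : (MonoidAlgebra.single σ c : MonoidAlgebra F (Equiv.Perm (Fin w)))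
              = c • MonoidAlgebra.single σ (1 : F) := by
            rw [MonoidAlgebra.smul_single', mul_one]
          rw [hc, TensorProduct.tmul_smul]
          simp only [map_smul, LinearMap.smul_apply]
          rw [key]
      | add p q hp hq =>
        simp only [TensorProduct.add_tmul, map_add, LinearMap.add_apply, hp, hq]
end
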